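/- Let N = 3 and A = {1, 2, 3}, and define F : Δ_A → ℝ³ by F(μ₁, μ₂, μ₃) = (−μ₁ − μ₂, μ₁, −μ₃). For an action profile a = (a¹, a², a³) ∈ A³ let μ̂(a) = (1/3)(e_{a¹} + e_{a²} + e_{a³}) ∈ Δ_A be its empirical distribution, and define the deterministic payoff of player i by V^i(a) = F(μ̂(a))(a^i). Then (i) F is monotone, i.e. (F(μ) − F(μ′))ᵀ(μ − μ′) ≤ 0 for all μ, μ′ ∈ Δ_A, and (ii) there exists no function P : A³ → ℝ such that V^i(a, a^{−i}) − V^i(a′, a^{−i}) = P(a, a^{−i}) − P(a′, a^{−i}) for all players i ∈ {1,2,3}, all profiles in A³, and all actions a, a′ ∈ A; that is, this monotone static mean-field game is not a potential game. -/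

import Mathlib

open scoped BigOperators
open Finset

noncomputable section

/-- The probability simplex over `Fin K`, inside Euclidean space (ℓ2 norm). -/
def simplex (K : ℕ) : Set (EuclideanSpace ℝ (Fin K)) :=
  {x | (∀ a, 0 ≤ x a) ∧ ∑ a, x a = 1}

/-- The payoff map `F(μ₁, μ₂, μ₃) = (−μ₁ − μ₂, μ₁, −μ₃)` on `ℝ³`. -/
def F11 : EuclideanSpace ℝ (Fin 3) → EuclideanSpace ℝ (Fin 3) :=
  fun μ => WithLp.toLp 2 ![-(μ 0) - μ 1, μ 0, -(μ 2)]

/-- Empirical distribution `μ̂(a) = (1/3)(e_{a¹} + e_{a²} + e_{a³})` of an action profile. -/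
def emp11 (v : Fin 3 → Fin 3) : EuclideanSpace ℝ (Fin 3) :=
  (3 : ℝ)⁻¹ • ∑ j : Fin 3, EuclideanSpace.single (v j) (1 : ℝ)

/-- Deterministic payoff `V^i(a) = F(μ̂(a))(a^i)` of player `i`. -/
def V11 (v : Fin 3 → Fin 3) (i : Fin 3) : ℝ := F11 (emp11 v) (v i)

/-- Remark 2 of the paper: a monotone SMFG that is not a potential game.
With `N = 3`, `A = {1,2,3}` and `F(μ₁,μ₂,μ₃) = (−μ₁−μ₂, μ₁, −μ₃)`: (i) `F` is monotone, and
(ii) there is no potential `P : A³ → ℝ` with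
`V^i(a, a^{−i}) − V^i(a′, a^{−i}) = P(a, a^{−i}) − P(a′, a^{−i})` for all `i`, profiles, and
actions `a, a′`. -/
theorem stmt11 :
    (∀ μ₁ ∈ simplex 3, ∀ μ₂ ∈ simplex 3,
        ∑ a : Fin 3, (F11 μ₁ a - F11 μ₂ a) * (μ₁ a - μ₂ a) ≤ 0)
    ∧ ¬ ∃ P : (Fin 3 → Fin 3) → ℝ,
        ∀ (i : Fin 3) (prof : Fin 3 → Fin 3) (a a' : Fin 3),
          V11 (Function.update prof i a) i - V11 (Function.update prof i a') i
            = P (Function.update prof i a) - P (Function.update prof i a') := by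
  constructor
  · intro μ₁ _ μ₂ _
    simp only [F11, Fin.sum_univ_three, Matrix.cons_val_zero, Matrix.cons_val_one,
      Matrix.head_cons, Matrix.cons_val_two, Matrix.tail_cons]
    nlinarith [sq_nonneg (μ₁ 0 - μ₂ 0), sq_nonneg (μ₁ 2 - μ₂ 2)]
  · rintro ⟨P, hP⟩
    have h1 := hP 0 ![0, 0, 2] 0 2
    have h2 := hP 1 ![2, 0, 2] 0 1
    have h3 := hP 0 ![2, 1, 2] 2 0
    have h4 := hP 1 ![0, 1, 2] 1 0
    have u1 : Function.update ![(0:Fin 3), 0, 2] 0 0 = ![0, 0, 2] := by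
      funext i; fin_cases i <;> rfl
    have u2 : Function.update ![(0:Fin 3), 0, 2] 0 2 = ![2, 0, 2] := by
      funext i; fin_cases i <;> rfl
    have u3 : Function.update ![(2:Fin 3), 0, 2] 1 0 = ![2, 0, 2] := by
      funext i; fin_cases i <;> rfl
    have u4 : Function.update ![(2:Fin 3), 0, 2] 1 1 = ![2, 1, 2] := by
      funext i; fin_cases i <;> rfl
    have u5 : Function.update ![(2:Fin 3), 1, 2] 0 2 = ![2, 1, 2] := by
      funext i; fin_cases i <;> rfl
    have u6 : Function.update ![(2:Fin 3), 1, 2] 0 0 = ![0, 1, 2] := by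
      funext i; fin_cases i <;> rfl
    have u7 : Function.update ![(0:Fin 3), 1, 2] 1 1 = ![0, 1, 2] := by
      funext i; fin_cases i <;> rfl
    have u8 : Function.update ![(0:Fin 3), 1, 2] 1 0 = ![0, 0, 2] := by
      funext i; fin_cases i <;> rfl
    rw [u1, u2] at h1
    rw [u3, u4] at h2
    rw [u5, u6] at h3
    rw [u7, u8] at h4
    have v1 : V11 ![0, 0, 2] 0 = -2/3 := by
      norm_num [V11, F11, emp11, EuclideanSpace.single_apply, Fin.sum_univ_three, Matrix.cons_val_two, Matrix.tail_cons, Matrix.head_cons, Fin.ext_iff]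
    have v2 : V11 ![2, 0, 2] 0 = -2/3 := by
      norm_num [V11, F11, emp11, EuclideanSpace.single_apply, Fin.sum_univ_three, Matrix.cons_val_two, Matrix.tail_cons, Matrix.head_cons, Fin.ext_iff]
    have v3 : V11 ![2, 0, 2] 1 = -1/3 := by
      norm_num [V11, F11, emp11, EuclideanSpace.single_apply, Fin.sum_univ_three, Matrix.cons_val_two, Matrix.tail_cons, Matrix.head_cons, Fin.ext_iff]
    have v4 : V11 ![2, 1, 2] 1 = 0 := by
      norm_num [V11, F11, emp11, EuclideanSpace.single_apply, Fin.sum_univ_three, Matrix.cons_val_two, Matrix.tail_cons, Matrix.head_cons, Fin.ext_iff]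
    have v5 : V11 ![2, 1, 2] 0 = -2/3 := by
      norm_num [V11, F11, emp11, EuclideanSpace.single_apply, Fin.sum_univ_three, Matrix.cons_val_two, Matrix.tail_cons, Matrix.head_cons, Fin.ext_iff]
    have v6 : V11 ![0, 1, 2] 0 = -2/3 := by
      norm_num [V11, F11, emp11, EuclideanSpace.single_apply, Fin.sum_univ_three, Matrix.cons_val_two, Matrix.tail_cons, Matrix.head_cons, Fin.ext_iff]
    have v7 : V11 ![0, 1, 2] 1 = 1/3 := by
      norm_num [V11, F11, emp11, EuclideanSpace.single_apply, Fin.sum_univ_three, Matrix.cons_val_two, Matrix.tail_cons, Matrix.head_cons, Fin.ext_iff]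
    have v8 : V11 ![0, 0, 2] 1 = -2/3 := by
      norm_num [V11, F11, emp11, EuclideanSpace.single_apply, Fin.sum_univ_three, Matrix.cons_val_two, Matrix.tail_cons, Matrix.head_cons, Fin.ext_iff]
    rw [v1, v2] at h1
    rw [v3, v4] at h2
    rw [v5, v6] at h3
    rw [v7, v8] at h4
    linarith
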